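/- arXiv:0902.1868 — 5 statements merged into one kernel-verified Lean document; each statement's English description precedes it below -/
import Mathlib

section
/- Recursive polynomial construction: Let ℓ ≥ 0 and for 0 ≤ i ≤ ℓ let q_i be prime powers, d_i ≥ 1 integers, f_i > 1 reals with q_i ≥ f_i Δ d_i. Suppose φ_0 injects [N] into degree-≤d_0 polynomials over F_{q_0} (requiring q_0^{d_0+1} ≥ N) and for i ≥ 1, φ_i injects F_{q_{i-1}} into degree-≤d_i polynomials over F_{q_i} (requiring q_i^{d_i+1} ≥ q_{i-1}). For any one-hop view (x, Γ) with |Γ| ≤ Δ, the number of tuples (α_0,…,α_ℓ) ∈ F_{q_0}×···×F_{q_ℓ} such that for all i ∈ {0,…,ℓ}, the iterated values β_{i,x} and β_{i,y} differ for all y ∈ Γ (where β_{0,z} = φ_{0,z}(α_0) and β_{i,z} = φ_{i,β_{i-1,z}}(α_i)) is at least ∏_{i=0}^{ℓ} q_i·(1 - 1/f_i). -/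
open scoped Classical

/-- The iterated values of the recursive polynomial construction:
`β_{0,z} = φ_{0,z}(α_0)` and `β_{i,z} = φ_{i,β_{i-1,z}}(α_i)`. -/
def beta {ι : Type} (F : ℕ → Type) [∀ i, Field (F i)] (ℓ : ℕ)
    (φ0 : ι → Polynomial (F 0)) (φ : ∀ i : ℕ, F i → Polynomial (F (i + 1)))
    (a : ∀ i : Fin (ℓ + 1), F i) : (i : ℕ) → i ≤ ℓ → ι → F i
  | 0, _, z => (φ0 z).eval (a ⟨0, Nat.succ_pos ℓ⟩)
  | i + 1, h, z =>
      (φ i (beta F ℓ φ0 φ a i (Nat.le_of_succ_le h) z)).eval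
        (a ⟨i + 1, Nat.succ_lt_succ h⟩)

lemma beta_congr {ι : Type} (F : ℕ → Type) [∀ i, Field (F i)] (ℓ : ℕ)
    (φ0 : ι → Polynomial (F 0)) (φ : ∀ i : ℕ, F i → Polynomial (F (i + 1)))
    (a b : ∀ i : Fin (ℓ + 1), F i) :
    ∀ (i : ℕ) (h : i ≤ ℓ), (∀ j : Fin (ℓ + 1), (j : ℕ) ≤ i → a j = b j) →
      ∀ z, beta F ℓ φ0 φ a i h z = beta F ℓ φ0 φ b i h z
  | 0, h, hab, z => by
      simp only [beta]
      rw [hab ⟨0, Nat.succ_pos ℓ⟩ (by simp)]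
  | i + 1, h, hab, z => by
      simp only [beta]
      rw [beta_congr F ℓ φ0 φ a b i (Nat.le_of_succ_le h)
            (fun j hj => hab j (le_trans hj (Nat.le_succ i))) z,
          hab ⟨i + 1, Nat.succ_lt_succ h⟩ (by simp)]

/-- The "good at level `i`" predicate. -/
def Pred {N : ℕ} (F : ℕ → Type) [∀ i, Field (F i)] (ℓ : ℕ)
    (φ0 : Fin N → Polynomial (F 0)) (φ : ∀ i : ℕ, F i → Polynomial (F (i + 1)))
    (x : Fin N) (Γ : Finset (Fin N)) (a : ∀ i : Fin (ℓ + 1), F i) (i : ℕ) : Prop :=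
  ∀ (h : i ≤ ℓ), ∀ y ∈ Γ, beta F ℓ φ0 φ a i h x ≠ beta F ℓ φ0 φ a i h y

lemma count_aux (m : ℕ) (F : ℕ → Type) (instF : ∀ i, Fintype (F i))
    (P : (∀ i : Fin m, F i) → ℕ → Prop)
    (hdep : ∀ a b : ∀ i : Fin m, F i, ∀ i : ℕ,
      (∀ j : Fin m, (j : ℕ) ≤ i → a j = b j) → P a i → P b i)
    (b : ℕ → ℕ)
    (hbad : ∀ (i : ℕ) (hi : i < m), ∀ a : ∀ i : Fin m, F i, (∀ j < i, P a j) →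
      (Finset.univ.filter
        (fun α : F i => ¬ P (Function.update a ⟨i, hi⟩ α) i)).card ≤ b i) :
    ∏ i ∈ Finset.range m, (Fintype.card (F i) - b i) ≤
      (Finset.univ.filter (fun a : ∀ i : Fin m, F i => ∀ i < m, P a i)).card := by
  induction m generalizing F b with
  | zero =>
      simp only [Finset.range_zero, Finset.prod_empty]
      refine Finset.card_pos.mpr ⟨fun i => i.elim0, Finset.mem_filter.mpr ⟨Finset.mem_univ _, by omega⟩⟩
  | succ n IH =>
      by_cases hne : ∀ i : Fin (n + 1), Nonempty (F i)
      swap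
      · push_neg at hne
        obtain ⟨i, hi⟩ := hne
        have h0 : Fintype.card (F i) = 0 := Fintype.card_eq_zero
        refine le_trans (le_of_eq (Finset.prod_eq_zero (Finset.mem_range.mpr i.isLt) ?_))
          (Nat.zero_le _)
        have : (⟨(i : ℕ), i.isLt⟩ : Fin (n+1)) = i := by
          simp
        simp [h0]
      · have afix : ∀ i : Fin (n + 1), F i := fun i => (hne i).some
        classical
        set Good0 : Finset (F 0) :=
          Finset.univ.filter (fun α : F 0 => P (Function.update afix ⟨0, n.succ_pos⟩ α) 0)
          with hGood0def
        have hGood0 : Fintype.card (F 0) - b 0 ≤ Good0.card := by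
          have h1 := hbad 0 n.succ_pos afix (by omega)
          have h2 : Fintype.card (F 0) ≤ Good0.card +
              (Finset.univ.filter
                (fun α : F 0 => ¬ P (Function.update afix ⟨0, n.succ_pos⟩ α) 0)).card := by
            rw [← Finset.card_univ]
            refine le_trans (Finset.card_le_card ?_) (Finset.card_union_le _ _)
            intro α _
            by_cases hp : P (Function.update afix ⟨0, n.succ_pos⟩ α) 0
            · exact Finset.mem_union_left _ (Finset.mem_filter.mpr ⟨Finset.mem_univ _, hp⟩)
            · exact Finset.mem_union_right _ (Finset.mem_filter.mpr ⟨Finset.mem_univ _, hp⟩)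
          omega
        have hP0 : ∀ (α : F 0), α ∈ Good0 → ∀ (a' : ∀ i : Fin n, F (i + 1)),
            P (Fin.cons α a') 0 := by
          intro α hα a'
          refine hdep _ _ 0 ?_ ((Finset.mem_filter.mp hα).2)
          intro j hj
          have hj0 : j = ⟨0, n.succ_pos⟩ := by
            ext
            simpa using Nat.le_zero.mp hj
          subst hj0
          exact Function.update_self _ _ _
        set GoodTail : F 0 → Finset (∀ i : Fin n, F (i + 1)) := fun α =>
          Finset.univ.filter
            (fun a' : ∀ i : Fin n, F (i + 1) => ∀ i < n, P (Fin.cons α a') (i + 1))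
          with hGTdef
        have hTail : ∀ α ∈ Good0,
            ∏ i ∈ Finset.range n, (Fintype.card (F (i + 1)) - b (i + 1)) ≤
              (GoodTail α).card := by
          intro α hα
          refine IH (fun k => F (k + 1)) (fun k => instF (k + 1))
            (fun a' i => P (Fin.cons α a') (i + 1)) ?_ (fun i => b (i + 1)) ?_
          · intro a' b' i hab h
            refine hdep _ _ (i + 1) ?_ h
            intro j hj
            cases j using Fin.cases with
            | zero => rfl
            | succ k =>
                show a' k = b' k
                refine hab k ?_
                simp only [Fin.val_succ] at hj
                omega
          · intro i hi a' hpre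
            have key := hbad (i + 1) (Nat.succ_lt_succ hi) (Fin.cons α a') ?_
            · refine le_trans (le_of_eq ?_) key
              congr 1
              ext β
              have hPP : P (Fin.cons α (Function.update a' ⟨i, hi⟩ β)) (i + 1) =
                  P (Function.update (Fin.cons α a') ⟨i + 1, Nat.succ_lt_succ hi⟩ β) (i + 1) := by
                exact congrArg (fun t => P t (i + 1)) (Fin.cons_update (α := fun k : Fin (n + 1) => F k) α a' ⟨i, hi⟩ β)
              simp only [Finset.mem_filter, Finset.mem_univ, true_and]
              exact not_congr (iff_of_eq hPP)
            · intro j hj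
              cases j with
              | zero => exact hP0 α hα a'
              | succ k => exact hpre k (Nat.lt_of_succ_lt_succ hj)
        have hsig : (Good0.sigma GoodTail).card ≤
            (Finset.univ.filter
              (fun a : ∀ i : Fin (n + 1), F i => ∀ i < n + 1, P a i)).card := by
          refine Finset.card_le_card_of_injOn (fun p => Fin.cons p.1 p.2) ?_ ?_
          · rintro ⟨α, a'⟩ hp
            rw [Finset.mem_coe, Finset.mem_sigma] at hp
            refine Finset.mem_filter.mpr ⟨Finset.mem_univ _, ?_⟩
            intro i hilt
            cases i with
            | zero => exact hP0 α hp.1 a'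
            | succ k =>
                exact (Finset.mem_filter.mp hp.2).2 k (Nat.lt_of_succ_lt_succ hilt)
          · rintro ⟨α, a'⟩ - ⟨β, b'⟩ - h
            simp only at h
            have h0 : α = β := by
              have := congrFun h 0
              exact this
            subst h0
            have h1 : a' = b' := by
              funext k
              have := congrFun h k.succ
              exact this
            subst h1
            rfl
        rw [Finset.card_sigma] at hsig
        have hsum : Good0.card *
            (∏ i ∈ Finset.range n, (Fintype.card (F (i + 1)) - b (i + 1))) ≤
            ∑ α ∈ Good0, (GoodTail α).card := by
          simpa using Finset.card_nsmul_le_sum Good0 _ _ hTail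
        calc ∏ i ∈ Finset.range (n + 1), (Fintype.card (F i) - b i)
            = (∏ i ∈ Finset.range n, (Fintype.card (F (i + 1)) - b (i + 1))) *
              (Fintype.card (F 0) - b 0) := Finset.prod_range_succ' _ _
          _ ≤ (∏ i ∈ Finset.range n, (Fintype.card (F (i + 1)) - b (i + 1))) *
              Good0.card := Nat.mul_le_mul_left _ hGood0
          _ = Good0.card * ∏ i ∈ Finset.range n, (Fintype.card (F (i + 1)) - b (i + 1)) :=
              Nat.mul_comm _ _
          _ ≤ ∑ α ∈ Good0, (GoodTail α).card := hsum
          _ ≤ _ := hsig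

/-- Counting core of the recursive polynomial construction: with `q_i ≥ f_iΔd_i`
(`f_i > 1`), `φ_0 : [N] ↪` degree-`≤d_0` polynomials over `F_{q_0}`
(`q_0^{d_0+1} ≥ N`), and `φ_i : F_{q_{i-1}} ↪` degree-`≤d_i` polynomials over
`F_{q_i}` (`q_i^{d_i+1} ≥ q_{i-1}`), for every one-hop view `(x, Γ)` with
`|Γ| ≤ Δ` the number of tuples `(α_0,…,α_ℓ)` such that `β_{i,x} ≠ β_{i,y}` for
all `0 ≤ i ≤ ℓ` and all `y ∈ Γ` is at least `∏_{i=0}^{ℓ} q_i(1 - 1/f_i)`. -/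
theorem stmt_6 (N Δ ℓ : ℕ) (F : ℕ → Type) [∀ i, Field (F i)]
    [∀ i, Fintype (F i)] [∀ i, DecidableEq (F i)]
    (d : ℕ → ℕ) (f : ℕ → ℝ)
    (hd : ∀ i ≤ ℓ, 1 ≤ d i) (hf : ∀ i ≤ ℓ, 1 < f i)
    (hq : ∀ i ≤ ℓ, f i * (Δ : ℝ) * (d i : ℝ) ≤ (Fintype.card (F i) : ℝ))
    (φ0 : Fin N → Polynomial (F 0))
    (φ : ∀ i : ℕ, F i → Polynomial (F (i + 1)))
    (hφ0 : Function.Injective φ0) (hφ : ∀ i, Function.Injective (φ i))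
    (hdeg0 : ∀ z, (φ0 z).natDegree ≤ d 0)
    (hdeg : ∀ i b, (φ i b).natDegree ≤ d (i + 1))
    (hN0 : N ≤ Fintype.card (F 0) ^ (d 0 + 1))
    (hNi : ∀ i, Fintype.card (F i) ≤ Fintype.card (F (i + 1)) ^ (d (i + 1) + 1))
    (x : Fin N) (Γ : Finset (Fin N)) (hx : x ∉ Γ) (hΓ : Γ.card ≤ Δ) :
    ∏ i ∈ Finset.range (ℓ + 1), (Fintype.card (F i) : ℝ) * (1 - 1 / f i) ≤
      ((Finset.univ.filter
          (fun a : ∀ i : Fin (ℓ + 1), F i =>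
            ∀ (i : ℕ) (h : i ≤ ℓ), ∀ y ∈ Γ,
              beta F ℓ φ0 φ a i h x ≠ beta F ℓ φ0 φ a i h y)).card : ℝ) := by
  classical
  have hdepP : ∀ a b : ∀ i : Fin (ℓ + 1), F i, ∀ i : ℕ,
      (∀ j : Fin (ℓ + 1), (j : ℕ) ≤ i → a j = b j) →
      Pred F ℓ φ0 φ x Γ a i → Pred F ℓ φ0 φ x Γ b i := by
    intro a b i hab hPa h y hy
    rw [← beta_congr F ℓ φ0 φ a b i h hab x, ← beta_congr F ℓ φ0 φ a b i h hab y]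
    exact hPa h y hy
  have hbadP : ∀ (i : ℕ) (hi : i < ℓ + 1), ∀ a : ∀ i : Fin (ℓ + 1), F i,
      (∀ j < i, Pred F ℓ φ0 φ x Γ a j) →
      (Finset.univ.filter
        (fun α : F i => ¬ Pred F ℓ φ0 φ x Γ (Function.update a ⟨i, hi⟩ α) i)).card
        ≤ Δ * d i := by
    intro i hi a hpre
    have hiℓ : i ≤ ℓ := Nat.lt_succ_iff.mp hi
    obtain ⟨p, hpne, hpeval, hpdeg⟩ :
        ∃ p : Fin N → Polynomial (F i),
          (∀ y ∈ Γ, p x ≠ p y) ∧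
          (∀ (α : F i) (h : i ≤ ℓ) (z : Fin N),
            beta F ℓ φ0 φ (Function.update a ⟨i, hi⟩ α) i h z = (p z).eval α) ∧
          (∀ z, (p z).natDegree ≤ d i) := by
      cases i with
      | zero =>
          refine ⟨φ0, ?_, ?_, hdeg0⟩
          · intro y hy he
            exact hx ((hφ0 he) ▸ hy)
          · intro α h z
            simp only [beta]
            exact congrArg (fun t => (φ0 z).eval t) (Function.update_self _ _ _)
      | succ j =>
          have hjℓ : j ≤ ℓ := Nat.le_of_succ_le hiℓ
          refine ⟨fun z => φ j (beta F ℓ φ0 φ a j hjℓ z), ?_, ?_,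
            fun z => hdeg j _⟩
          · intro y hy he
            exact hpre j (Nat.lt_succ_self j) hjℓ y hy (hφ j he)
          · intro α h z
            simp only [beta]
            rw [beta_congr F ℓ φ0 φ (Function.update a ⟨j + 1, hi⟩ α) a j
                (Nat.le_of_succ_le h)
                (fun j' hj' => Function.update_of_ne (a := j')
                  (a' := (⟨j + 1, hi⟩ : Fin (ℓ + 1)))
                  (Fin.ne_of_val_ne (by simp only [Fin.val_mk]; omega)) α a) z]
            exact congrArg (fun t => (φ j (beta F ℓ φ0 φ a j hjℓ z)).eval t)
              (Function.update_self _ _ _)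
    have hsub : (Finset.univ.filter
        (fun α : F i => ¬ Pred F ℓ φ0 φ x Γ (Function.update a ⟨i, hi⟩ α) i)) ⊆
        Γ.biUnion (fun y => (p x - p y).roots.toFinset) := by
      intro α hα
      have hnp := (Finset.mem_filter.mp hα).2
      rw [Pred] at hnp
      push_neg at hnp
      obtain ⟨h, y, hy, heq⟩ := hnp
      refine Finset.mem_biUnion.mpr ⟨y, hy, Multiset.mem_toFinset.mpr ?_⟩
      rw [Polynomial.mem_roots']
      refine ⟨sub_ne_zero.mpr (hpne y hy), ?_⟩
      have hev : (p x).eval α = (p y).eval α := by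
        rw [← hpeval α h x, ← hpeval α h y]
        exact heq
      simp [Polynomial.IsRoot, Polynomial.eval_sub, hev]
    refine le_trans (Finset.card_le_card hsub) ?_
    refine le_trans Finset.card_biUnion_le ?_
    refine le_trans (Finset.sum_le_card_nsmul Γ _ (d i) ?_) ?_
    · intro y hy
      refine le_trans (Multiset.toFinset_card_le _)
        (le_trans (Polynomial.card_roots' _) ?_)
      exact le_trans (Polynomial.natDegree_sub_le _ _) (max_le (hpdeg x) (hpdeg y))
    · simp only [smul_eq_mul]
      exact Nat.mul_le_mul_right _ hΓ
  have key := count_aux (ℓ + 1) F (fun i => inferInstance) (Pred F ℓ φ0 φ x Γ)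
    hdepP (fun i => Δ * d i) hbadP
  have hfe : (Finset.univ.filter
      (fun a : ∀ i : Fin (ℓ + 1), F i =>
        ∀ (i : ℕ) (h : i ≤ ℓ), ∀ y ∈ Γ,
          beta F ℓ φ0 φ a i h x ≠ beta F ℓ φ0 φ a i h y)) =
      (Finset.univ.filter
        (fun a : ∀ i : Fin (ℓ + 1), F i => ∀ i < ℓ + 1, Pred F ℓ φ0 φ x Γ a i)) := by
    apply Finset.filter_congr
    intro a _
    simp only [Pred]
    constructor
    · intro H i _ h y hy
      exact H i h y hy
    · intro H i h y hy
      exact H i (Nat.lt_succ_of_le h) h y hy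
  rw [hfe]
  have key' : ((∏ i ∈ Finset.range (ℓ + 1),
      (Fintype.card (F i) - Δ * d i) : ℕ) : ℝ) ≤
      ((Finset.univ.filter
        (fun a : ∀ i : Fin (ℓ + 1), F i =>
          ∀ i < ℓ + 1, Pred F ℓ φ0 φ x Γ a i)).card : ℝ) := by
    exact_mod_cast key
  refine le_trans ?_ key'
  rw [Nat.cast_prod]
  refine Finset.prod_le_prod (fun i hi => ?_) (fun i hi => ?_)
  · have hiℓ : i ≤ ℓ := Nat.lt_succ_iff.mp (Finset.mem_range.mp hi)
    have hfi := hf i hiℓ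
    have h1 : 1 / f i ≤ 1 := by
      rw [div_le_one (lt_trans one_pos hfi)]
      exact le_of_lt hfi
    have hc : (0:ℝ) ≤ (Fintype.card (F i) : ℝ) := Nat.cast_nonneg _
    nlinarith
  · have hiℓ : i ≤ ℓ := Nat.lt_succ_iff.mp (Finset.mem_range.mp hi)
    have hfi := hf i hiℓ
    have hqi := hq i hiℓ
    have hfpos : (0 : ℝ) < f i := lt_trans one_pos hfi
    have hΔd : Δ * d i ≤ Fintype.card (F i) := by
      have h1 : ((Δ * d i : ℕ) : ℝ) ≤ (Fintype.card (F i) : ℝ) := by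
        push_cast
        have h0 : (0:ℝ) ≤ (Δ:ℝ) * (d i : ℝ) := by positivity
        nlinarith
      exact_mod_cast h1
    rw [Nat.cast_sub hΔd]
    push_cast
    have hdiv : (Δ : ℝ) * d i ≤ (Fintype.card (F i) : ℝ) / f i := by
      rw [le_div_iff₀ hfpos]
      nlinarith
    have hexp : (Fintype.card (F i) : ℝ) * (1 - 1 / f i) =
        (Fintype.card (F i) : ℝ) - (Fintype.card (F i) : ℝ) / f i := by
      field_simp
    rw [hexp]
    linarith
end

section
/- The multicoloring defined by the recursive polynomial construction is valid: if two adjacent one-hop views (x, Γ_u) and (y, Γ_v) satisfy x ∈ Γ_v and y ∈ Γ_u with x ≠ y, then their assigned color sets (subsets of F_{q_0}×···×F_{q_ℓ}×F_{q_ℓ}, where (α_0,…,α_ℓ, β_{ℓ,x}) is selected iff β_{ℓ,x} ≠ β_{ℓ,y'} for all y' ∈ Γ) are disjoint. -/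
/-- Validity of the multicoloring from the recursive polynomial construction:
the color set of view `(x, Γ)` consists of all `(α, β_{ℓ,x})` with
`β_{ℓ,x} ≠ β_{ℓ,y'}` for all `y' ∈ Γ`.  For adjacent views `(x, Γu)` and
`(y, Γv)` (i.e. `x ≠ y`, `x ∈ Γv`, `y ∈ Γu`) the color sets are disjoint. -/
theorem stmt_7 (N ℓ : ℕ) (F : ℕ → Type) [∀ i, Field (F i)]
    (φ0 : Fin N → Polynomial (F 0))
    (φ : ∀ i : ℕ, F i → Polynomial (F (i + 1)))
    (x y : Fin N) (Γu Γv : Finset (Fin N))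
    (hxy : x ≠ y) (hxv : x ∈ Γv) (hyu : y ∈ Γu)
    (hxu : x ∉ Γu) (hyv : y ∉ Γv) :
    Disjoint
      {c : (∀ i : Fin (ℓ + 1), F i) × F ℓ |
        c.2 = beta F ℓ φ0 φ c.1 ℓ le_rfl x ∧
        ∀ y' ∈ Γu,
          beta F ℓ φ0 φ c.1 ℓ le_rfl x ≠ beta F ℓ φ0 φ c.1 ℓ le_rfl y'}
      {c : (∀ i : Fin (ℓ + 1), F i) × F ℓ |
        c.2 = beta F ℓ φ0 φ c.1 ℓ le_rfl y ∧
        ∀ x' ∈ Γv,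
          beta F ℓ φ0 φ c.1 ℓ le_rfl y ≠ beta F ℓ φ0 φ c.1 ℓ le_rfl x'} := by
  rw [Set.disjoint_left]
  rintro c ⟨h1, h2⟩ ⟨h3, _⟩
  exact h2 y hyu (h1 ▸ h3)
end

section
/- No one-shot multicoloring algorithm has approximation ratio exceeding 1: for any one-shot algorithm (a function from one-hop views to color subsets of [k] such that adjacent one-hop views receive disjoint sets), there is no δ and no assignment giving every one-hop view with |Γ| = δ more than k/(δ+1) colors. Concretely, if f assigns to each one-hop view (x, Γ) with |Γ| = δ a set f(x,Γ) ⊆ [k], and f(x,Γ_x) ∩ f(y,Γ_y) = ∅ whenever the views satisfy the adjacency condition, then considering a clique on δ+1 IDs, the sum of the sizes of the δ+1 assigned color sets is at most k, so some view gets at most k/(δ+1) colors. -/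
/-- No one-shot multicoloring algorithm has approximation ratio exceeding 1:
if `f` assigns color sets to one-hop views with adjacent views (satisfying
`x ≠ y`, `x ∈ Γ_y \ Γ_x`, `y ∈ Γ_x \ Γ_y`) receiving disjoint sets, then on a
clique of `δ+1` IDs the sizes of the assigned sets sum to at most `k`, so some
view gets at most `k/(δ+1)` colors. -/
theorem stmt_9 (N k δ : ℕ) (f : Fin N → Finset (Fin N) → Finset (Fin k))
    (hdisj : ∀ (x y : Fin N) (Γx Γy : Finset (Fin N)),
      x ≠ y → x ∈ Γy → x ∉ Γx → y ∈ Γx → y ∉ Γy →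
        Disjoint (f x Γx) (f y Γy))
    (K : Finset (Fin N)) (hK : K.card = δ + 1) :
    (∑ x ∈ K, (f x (K.erase x)).card ≤ k) ∧
    ∃ x ∈ K, ((f x (K.erase x)).card : ℝ) ≤ (k : ℝ) / ((δ : ℝ) + 1) := by
  have hpw : (K : Set (Fin N)).PairwiseDisjoint (fun x => f x (K.erase x)) := by
    intro x hx y hy hxy
    exact hdisj x y (K.erase x) (K.erase y) hxy
      (Finset.mem_erase.mpr ⟨hxy, hx⟩) (Finset.notMem_erase x K)
      (Finset.mem_erase.mpr ⟨Ne.symm hxy, hy⟩) (Finset.notMem_erase y K)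
  have hsum : ∑ x ∈ K, (f x (K.erase x)).card ≤ k := by
    calc ∑ x ∈ K, (f x (K.erase x)).card
        = (K.biUnion (fun x => f x (K.erase x))).card :=
          (Finset.card_biUnion (fun x hx y hy hxy => hpw hx hy hxy)).symm
      _ ≤ (Finset.univ : Finset (Fin k)).card := Finset.card_le_card (Finset.subset_univ _)
      _ = k := by simp
  refine ⟨hsum, ?_⟩
  by_contra h
  push_neg at h
  have hgt : (k : ℝ) < ∑ x ∈ K, ((f x (K.erase x)).card : ℝ) := by
    have := Finset.sum_lt_sum_of_nonempty
      (Finset.card_pos.mp (hK ▸ Nat.succ_pos δ))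
      (fun x hx => h x hx)
    calc (k : ℝ) = ∑ _x ∈ K, (k : ℝ) / ((δ : ℝ) + 1) := by
            rw [Finset.sum_const, hK, nsmul_eq_mul]
            push_cast
            field_simp
      _ < _ := this
  have hle : ∑ x ∈ K, ((f x (K.erase x)).card : ℝ) ≤ (k : ℝ) := by
    push_cast [← Nat.cast_sum] at *
    exact_mod_cast hsum
  linarith
end

section
/- Every deterministic one-shot c-coloring algorithm for graphs with maximum degree Δ and IDs in [N] yields c antisymmetric relations ≺_1,…,≺_c on [N] such that for every one-hop view (x, Γ) with |Γ| ≤ Δ there exists i ∈ [c] with x ≺_i y for all y ∈ Γ. Conversely, if for candidate relations there exists a one-hop view (x, Γ), |Γ| ≤ Δ, such that for all i ∈ [c] the set Γ ∩ B_i(x) is nonempty (B_i(x) = {y : ¬(x ≺_i y)}), then those relations do not give a valid c-coloring algorithm. -/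
/-- Every deterministic one-shot `c`-coloring algorithm `A` for graphs with
maximum degree `Δ` and IDs in `[N]` yields `c` antisymmetric relations
`≺_1, …, ≺_c` on `[N]` such that every one-hop view `(x, Γ)` with `|Γ| ≤ Δ`
has some `i` with `x ≺_i y` for all `y ∈ Γ`.  Conversely, if for candidate
relations there is a one-hop view `(x, Γ)`, `|Γ| ≤ Δ`, such that for all `i`
the set `Γ ∩ B_i(x)` is nonempty, then those relations do not give a valid
`c`-coloring algorithm. -/
theorem stmt_14 (N Δ c : ℕ) (hΔ : 1 ≤ Δ) (hN : 2 ≤ N)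
    (A : Fin N → Finset (Fin N) → Fin c)
    (hA : ∀ (x y : Fin N) (Γx Γy : Finset (Fin N)),
      x ≠ y → x ∈ Γy → x ∉ Γx → y ∈ Γx → y ∉ Γy →
        Γx.card ≤ Δ → Γy.card ≤ Δ → A x Γx ≠ A y Γy) :
    (∃ r : Fin c → Fin N → Fin N → Prop,
      (∀ α x y, ¬ r α x y ∨ ¬ r α y x) ∧
      (∀ (x : Fin N) (Γ : Finset (Fin N)), x ∉ Γ → Γ.card ≤ Δ →
        ∃ i, ∀ y ∈ Γ, r i x y)) ∧
    (∀ r : Fin c → Fin N → Fin N → Prop,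
      (∃ (x : Fin N) (Γ : Finset (Fin N)), x ∉ Γ ∧ Γ.card ≤ Δ ∧
        ∀ i, ∃ y ∈ Γ, ¬ r i x y) →
      ¬ ∀ (x : Fin N) (Γ : Finset (Fin N)), x ∉ Γ → Γ.card ≤ Δ →
          ∃ i, ∀ y ∈ Γ, r i x y) := by
  constructor
  · refine ⟨fun α x y => x ≠ y ∧ ∃ Γ, x ∉ Γ ∧ y ∈ Γ ∧ Γ.card ≤ Δ ∧ A x Γ = α, ?_, ?_⟩
    · intro α x y
      by_contra h
      push_neg at h
      obtain ⟨⟨hxy, Γx, hxΓx, hyΓx, hcx, hAx⟩, ⟨hyx, Γy, hyΓy, hxΓy, hcy, hAy⟩⟩ := h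
      exact hA x y Γx Γy hxy hxΓy hxΓx hyΓx hyΓy hcx hcy (hAx.trans hAy.symm)
    · intro x Γ hx hc
      exact ⟨A x Γ, fun y hy => ⟨fun h => hx (h ▸ hy), Γ, hx, hy, hc, rfl⟩⟩
  · rintro r ⟨x, Γ, hx, hc, hbad⟩ hgood
    obtain ⟨i, hi⟩ := hgood x Γ hx hc
    obtain ⟨y, hy, hny⟩ := hbad i
    exact hny (hi y hy)
end

section
/- For the neighborhood graph N_1(N, Δ) whose vertices are the one-hop views (x, Γ) with x ∈ [N], Γ ⊆ [N]\{x}, 1 ≤ |Γ| ≤ Δ, with edges between views satisfying the adjacency condition (x ≠ y, x ∈ Γ' \ Γ, y ∈ Γ \ Γ'): a function from one-hop views to colors is a valid deterministic one-shot coloring algorithm for all graphs of maximum degree Δ with IDs in [N] if and only if it is a proper coloring of N_1(N, Δ). In particular, the minimum number of colors of any deterministic one-shot coloring algorithm equals χ(N_1(N, Δ)). -/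
/-- The neighborhood graph `N_1(N, Δ)`: vertices are one-hop views `(x, Γ)`,
with an edge between `(x, Γ)` and `(y, Γ')` iff `x ≠ y`, `x ∈ Γ' \ Γ`,
`y ∈ Γ \ Γ'`, and both views have at most `Δ` neighbors. -/
def neighborhoodGraph (N Δ : ℕ) : SimpleGraph (Fin N × Finset (Fin N)) where
  Adj u v := u.1 ≠ v.1 ∧ u.1 ∈ v.2 ∧ u.1 ∉ u.2 ∧ v.1 ∈ u.2 ∧ v.1 ∉ v.2 ∧
    u.2.card ≤ Δ ∧ v.2.card ≤ Δ
  symm := by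
    constructor
    intro u v h
    exact ⟨h.1.symm, h.2.2.2.1, h.2.2.2.2.1, h.2.1, h.2.2.1,
      h.2.2.2.2.2.2, h.2.2.2.2.2.1⟩
  loopless := by
    constructor
    intro u h
    exact h.1 rfl

/-- A function `A` from one-hop views to colors is a valid deterministic
one-shot coloring algorithm for graphs of maximum degree `Δ` with IDs in `[N]`
if, for every such graph with injectively assigned IDs, adjacent nodes receive
distinct colors. -/
def IsValidOneShot (N Δ : ℕ) {C : Type} (A : Fin N × Finset (Fin N) → C) :
    Prop :=
  ∀ (V : Type) [Fintype V] [DecidableEq V] (G : SimpleGraph V)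
    [DecidableRel G.Adj] (f : V → Fin N), Function.Injective f →
      (∀ v, G.degree v ≤ Δ) → ∀ u v, G.Adj u v →
        A (f u, (G.neighborFinset u).image f) ≠
          A (f v, (G.neighborFinset v).image f)

section Aux

variable {N Δ : ℕ}

/-- The graph realizing two adjacent one-hop views. -/
private def realGraph (x y : Fin N) (Γ Γ' : Finset (Fin N))
    (hxΓ : x ∉ Γ) (hyΓ' : y ∉ Γ') : SimpleGraph (Fin N) where
  Adj a b := (a = x ∧ b ∈ Γ) ∨ (b = x ∧ a ∈ Γ) ∨ (a = y ∧ b ∈ Γ') ∨ (b = y ∧ a ∈ Γ')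
  symm := by
    constructor
    intro a b h
    rcases h with h | h | h | h
    · exact Or.inr (Or.inl h)
    · exact Or.inl h
    · exact Or.inr (Or.inr (Or.inr h))
    · exact Or.inr (Or.inr (Or.inl h))
  loopless := by
    constructor
    intro a h
    rcases h with ⟨rfl, h⟩ | ⟨rfl, h⟩ | ⟨rfl, h⟩ | ⟨rfl, h⟩ <;> first
      | exact hxΓ h
      | exact hyΓ' h

theorem valid_to_proper {C : Type} (A : Fin N × Finset (Fin N) → C)
    (hA : IsValidOneShot N Δ A) :
    ∀ u v, (neighborhoodGraph N Δ).Adj u v → A u ≠ A v := by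
  rintro ⟨x, Γ⟩ ⟨y, Γ'⟩ ⟨hxy, hxΓ', hxΓ, hyΓ, hyΓ', hΓ, hΓ'⟩
  replace hΓ : Γ.card ≤ Δ := hΓ
  replace hΓ' : Γ'.card ≤ Δ := hΓ'
  classical
  set G := realGraph x y Γ Γ' hxΓ hyΓ' with hG
  have hadj : ∀ a b, G.Adj a b ↔
      ((a = x ∧ b ∈ Γ) ∨ (b = x ∧ a ∈ Γ) ∨ (a = y ∧ b ∈ Γ') ∨ (b = y ∧ a ∈ Γ')) := by
    intro a b; rfl
  haveI : DecidableRel G.Adj := Classical.decRel _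
  have hnx : G.neighborFinset x = Γ := by
    ext b
    rw [SimpleGraph.mem_neighborFinset, hadj]
    constructor
    · rintro (⟨-, h⟩ | ⟨rfl, h⟩ | ⟨h, -⟩ | ⟨rfl, h⟩)
      · exact h
      · exact absurd h hxΓ
      · exact absurd h hxy
      · exact hyΓ
    · intro h; exact Or.inl ⟨rfl, h⟩
  have hny : G.neighborFinset y = Γ' := by
    ext b
    rw [SimpleGraph.mem_neighborFinset, hadj]
    constructor
    · rintro (⟨h, -⟩ | ⟨rfl, h⟩ | ⟨-, h⟩ | ⟨rfl, h⟩)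
      · exact absurd h.symm hxy
      · exact hxΓ'
      · exact h
      · exact absurd h hyΓ'
    · intro h; exact Or.inr (Or.inr (Or.inl ⟨rfl, h⟩))
  have hΓpos : 1 ≤ Γ.card := Finset.card_pos.mpr ⟨y, hyΓ⟩
  have hdeg : ∀ w, G.degree w ≤ Δ := by
    intro w
    rw [SimpleGraph.degree]
    by_cases hwx : w = x
    · subst hwx; rw [hnx]; exact hΓ
    by_cases hwy : w = y
    · subst hwy; rw [hny]; exact hΓ'
    by_cases h1 : w ∈ Γ <;> by_cases h2 : w ∈ Γ'
    · have hnw : G.neighborFinset w = {x, y} := by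
        ext b
        rw [SimpleGraph.mem_neighborFinset, hadj]
        simp only [Finset.mem_insert, Finset.mem_singleton]
        constructor
        · rintro (⟨h, -⟩ | ⟨rfl, -⟩ | ⟨h, -⟩ | ⟨rfl, -⟩)
          · exact absurd h hwx
          · exact Or.inl rfl
          · exact absurd h hwy
          · exact Or.inr rfl
        · rintro (rfl | rfl)
          · exact Or.inr (Or.inl ⟨rfl, h1⟩)
          · exact Or.inr (Or.inr (Or.inr ⟨rfl, h2⟩))
      rw [hnw]
      have hcard : ({x, y} : Finset (Fin N)).card = 2 := by
        rw [Finset.card_insert_of_notMem (by simpa using hxy), Finset.card_singleton]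
      rw [hcard]
      have hwy' : w ≠ y := hwy
      have : 1 < Γ.card := Finset.one_lt_card.mpr ⟨y, hyΓ, w, h1, fun h => hwy' h.symm⟩
      omega
    · have hnw : G.neighborFinset w = {x} := by
        ext b
        rw [SimpleGraph.mem_neighborFinset, hadj]
        simp only [Finset.mem_singleton]
        constructor
        · rintro (⟨h, -⟩ | ⟨rfl, -⟩ | ⟨h, -⟩ | ⟨-, h⟩)
          · exact absurd h hwx
          · exact rfl
          · exact absurd h hwy
          · exact absurd h h2
        · rintro rfl
          exact Or.inr (Or.inl ⟨rfl, h1⟩)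
      rw [hnw, Finset.card_singleton]
      omega
    · have hnw : G.neighborFinset w = {y} := by
        ext b
        rw [SimpleGraph.mem_neighborFinset, hadj]
        simp only [Finset.mem_singleton]
        constructor
        · rintro (⟨h, -⟩ | ⟨-, h⟩ | ⟨h, -⟩ | ⟨rfl, -⟩)
          · exact absurd h hwx
          · exact absurd h h1
          · exact absurd h hwy
          · exact rfl
        · rintro rfl
          exact Or.inr (Or.inr (Or.inr ⟨rfl, h2⟩))
      rw [hnw, Finset.card_singleton]
      omega
    · have hnw : G.neighborFinset w = ∅ := by
        ext b
        rw [SimpleGraph.mem_neighborFinset, hadj]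
        simp only [Finset.notMem_empty, iff_false]
        rintro (⟨h, -⟩ | ⟨-, h⟩ | ⟨h, -⟩ | ⟨-, h⟩)
        · exact hwx h
        · exact h1 h
        · exact hwy h
        · exact h2 h
      rw [hnw, Finset.card_empty]
      omega
  have hGxy : G.Adj x y := Or.inl ⟨rfl, hyΓ⟩
  have := hA (Fin N) G id Function.injective_id hdeg x y hGxy
  simpa [hnx, hny, Finset.image_id] using this

theorem proper_to_valid {C : Type} (A : Fin N × Finset (Fin N) → C)
    (hA : ∀ u v, (neighborhoodGraph N Δ).Adj u v → A u ≠ A v) :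
    IsValidOneShot N Δ A := by
  intro V _ _ G _ f hf hdeg u v huv
  apply hA
  refine ⟨fun h => G.ne_of_adj huv (hf h), ?_, ?_, ?_, ?_, ?_, ?_⟩
  · exact Finset.mem_image.mpr ⟨u, (G.mem_neighborFinset v u).mpr huv.symm, rfl⟩
  · intro h
    obtain ⟨w, hw, hwe⟩ := Finset.mem_image.mp h
    cases hf hwe
    exact G.irrefl ((G.mem_neighborFinset u u).mp hw)
  · exact Finset.mem_image.mpr ⟨v, (G.mem_neighborFinset u v).mpr huv, rfl⟩
  · intro h
    obtain ⟨w, hw, hwe⟩ := Finset.mem_image.mp h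
    cases hf hwe
    exact G.irrefl ((G.mem_neighborFinset v v).mp hw)
  · exact le_trans (Finset.card_image_le) (hdeg u)
  · exact le_trans (Finset.card_image_le) (hdeg v)

end Aux

/-- A function from one-hop views to colors is a valid deterministic one-shot
coloring algorithm iff it is a proper coloring of the neighborhood graph
`N_1(N, Δ)`; in particular, `c` colors suffice for some one-shot coloring
algorithm iff `N_1(N, Δ)` is `c`-colorable, so the minimum number of colors
equals `χ(N_1(N, Δ))`. -/
theorem stmt_19 (N Δ c : ℕ) :
    (∀ (C : Type) (A : Fin N × Finset (Fin N) → C),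
      IsValidOneShot N Δ A ↔
        ∀ u v, (neighborhoodGraph N Δ).Adj u v → A u ≠ A v) ∧
    ((∃ A : Fin N × Finset (Fin N) → Fin c, IsValidOneShot N Δ A) ↔
      (neighborhoodGraph N Δ).Colorable c) := by
  have key : ∀ (C : Type) (A : Fin N × Finset (Fin N) → C),
      IsValidOneShot N Δ A ↔
        ∀ u v, (neighborhoodGraph N Δ).Adj u v → A u ≠ A v :=
    fun C A => ⟨valid_to_proper A, proper_to_valid A⟩
  refine ⟨key, ?_⟩
  constructor
  · rintro ⟨A, hA⟩
    exact ⟨⟨A, fun h => (key _ A).mp hA _ _ h⟩⟩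
  · rintro ⟨col⟩
    exact ⟨col.1, (key _ col.1).mpr fun u v h => col.valid h⟩
end
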